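/- arXiv:1004.2894 — 2 statements merged into one kernel-verified Lean document; each statement's English description precedes it below -/
import Mathlib

section
/- Let f : Γ → ℝ be a homogeneous quasimorphism with defect D(f). Then D(f) = sup_{a,b∈Γ} |f([a,b])|, where [a,b] = aba⁻¹b⁻¹. -/
open scoped commutatorElement

/-- If `t * m ≤ K` for every natural `m`, then `t ≤ 0`. -/
private lemma aux_mul_nat_le {t K : ℝ} (h : ∀ m : ℕ, t * m ≤ K) : t ≤ 0 := by
  by_contra ht
  push_neg at ht
  obtain ⟨m, hm⟩ := exists_nat_gt (K / t)
  have h1 : K < t * m := by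
    rw [div_lt_iff₀ ht] at hm
    linarith [hm]
  exact absurd (h m) (not_le.mpr h1)

/-- The key group identity: `a⁻⁽ⁿ⁺²⁾ (ba)ⁿ⁺² b⁻⁽ⁿ⁺²⁾` (with `(ba)ⁿ⁺²` written as
`(ba)·X·(ba)` where `X = (ba)ⁿ`) is a conjugate of `a⁻ⁿ (ba)ⁿ b⁻ⁿ` times a commutator. -/
private lemma key_identity {Γ : Type*} [Group Γ] (a b X : Γ) (n : ℕ) :
    (a^(n+2))⁻¹ * ((b*a) * X * (b*a)) * (b^(n+2))⁻¹ =
      ((a^(n+2))⁻¹ * b * a^(n+1)) * ((a^n)⁻¹ * X * (b^n)⁻¹) * ((a^(n+2))⁻¹ * b * a^(n+1))⁻¹ *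
        (((a^(n+2))⁻¹ * b * a^(n+1)) * (b^(n+2) * a^(n+1)) * ((a^(n+2))⁻¹ * b * a^(n+1))⁻¹ *
          (b^(n+2) * a^(n+1))⁻¹) := by
  group

/-- The defect of a homogeneous quasimorphism `f` equals `sup_{a,b} |f([a,b])|`,
where `[a,b] = a * b * a⁻¹ * b⁻¹`. -/
theorem defect_eq_sup_commutator {Γ : Type*} [Group Γ] (f : Γ → ℝ)
    (hbdd : BddAbove (Set.range fun p : Γ × Γ => |f (p.1 * p.2) - f p.1 - f p.2|))
    (hhom : ∀ (n : ℤ) (x : Γ), f (x ^ n) = n * f x) :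
    (⨆ p : Γ × Γ, |f (p.1 * p.2) - f p.1 - f p.2|) = ⨆ p : Γ × Γ, |f ⁅p.1, p.2⁆| := by
  set D := ⨆ p : Γ × Γ, |f (p.1 * p.2) - f p.1 - f p.2| with hDdef
  have hD : ∀ u v : Γ, |f (u * v) - f u - f v| ≤ D := fun u v => le_ciSup hbdd (u, v)
  have hD0 : 0 ≤ D := le_trans (abs_nonneg _) (hD 1 1)
  have hf1 : f 1 = 0 := by have := hhom 0 1; simpa using this
  have hfinv : ∀ x : Γ, f x⁻¹ = -f x := by
    intro x; have := hhom (-1) x; simpa using this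
  have hfpow : ∀ (n : ℕ) (x : Γ), f (x ^ n) = n * f x := by
    intro n x
    have := hhom (n : ℤ) x
    rw [zpow_natCast] at this
    simpa using this
  -- conjugation invariance
  have hconj : ∀ g x : Γ, f (g * x * g⁻¹) = f x := by
    intro g x
    have habs : ∀ m : ℕ, |f (g * x * g⁻¹) - f x| * m ≤ 2 * D := by
      intro m
      have hpow : (g * x * g⁻¹) ^ m = g * x ^ m * g⁻¹ := conj_pow
      have e1 := hD g (x ^ m * g⁻¹)
      have e2 := hD (x ^ m) g⁻¹
      rw [← mul_assoc] at e1
      rw [hfinv g] at e2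
      have key : |f (g * x ^ m * g⁻¹) - f (x ^ m)| ≤ 2 * D := by
        have a1 := abs_le.mp e1
        have a2 := abs_le.mp e2
        rw [abs_le]; constructor <;> [linarith [a1.1, a2.1]; linarith [a1.2, a2.2]]
      calc |f (g * x * g⁻¹) - f x| * m
          = |(f (g * x * g⁻¹) - f x) * m| := by
            rw [abs_mul, Nat.abs_cast]
        _ = |f ((g * x * g⁻¹) ^ m) - f (x ^ m)| := by
            rw [hfpow m, hfpow m x]; ring_nf
        _ = |f (g * x ^ m * g⁻¹) - f (x ^ m)| := by rw [hpow]
        _ ≤ 2 * D := key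
    have h0 : |f (g * x * g⁻¹) - f x| ≤ 0 := aux_mul_nat_le habs
    have : |f (g * x * g⁻¹) - f x| = 0 := le_antisymm h0 (abs_nonneg _)
    have := abs_eq_zero.mp this
    linarith [this]
  have hba : ∀ u v : Γ, f (v * u) = f (u * v) := by
    intro u v
    have := hconj u⁻¹ (u * v)
    have e : u⁻¹ * (u * v) * u⁻¹⁻¹ = v * u := by group
    rw [e] at this
    exact this
  -- commutators are bounded by D
  have hcommD : ∀ u v : Γ, |f (u * v * u⁻¹ * v⁻¹)| ≤ D := by
    intro u v
    have e := hD (u * v * u⁻¹) v⁻¹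
    rw [hconj u v, hfinv v] at e
    have : u * v * u⁻¹ * v⁻¹ = (u * v * u⁻¹) * v⁻¹ := by group
    rw [this]
    have a1 := abs_le.mp e
    rw [abs_le]; constructor <;> [linarith [a1.1]; linarith [a1.2]]
  set C := ⨆ p : Γ × Γ, |f ⁅p.1, p.2⁆| with hCdef
  have hCbdd : BddAbove (Set.range fun p : Γ × Γ => |f ⁅p.1, p.2⁆|) := by
    refine ⟨D, ?_⟩
    rintro r ⟨p, rfl⟩
    simpa [commutatorElement_def] using hcommD p.1 p.2
  have hC : ∀ u v : Γ, |f (u * v * u⁻¹ * v⁻¹)| ≤ C := by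
    intro u v
    have := le_ciSup hCbdd ((u, v) : Γ × Γ)
    exact le_trans (le_of_eq (by simp [commutatorElement_def])) this
  have hCD : C ≤ D := ciSup_le fun p => by
    simpa [commutatorElement_def] using hcommD p.1 p.2
  -- the hard direction: 2δ(a,b) ≤ C + D for all a b
  have hmain : ∀ a b : Γ, 2 * (f (a * b) - f a - f b) ≤ C + D := by
    intro a b
    have hstep : ∀ n : ℕ,
        f ((a^(n+2))⁻¹ * (b*a)^(n+2) * (b^(n+2))⁻¹) ≤
          f ((a^n)⁻¹ * (b*a)^n * (b^n)⁻¹) + (C + D) := by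
      intro n
      set x := (a^(n+2))⁻¹ * b * a^(n+1) with hx
      set y := b^(n+2) * a^(n+1) with hy
      set R := (a^n)⁻¹ * (b*a)^n * (b^n)⁻¹ with hRn
      have hid : (a^(n+2))⁻¹ * (b*a)^(n+2) * (b^(n+2))⁻¹
          = (x * R * x⁻¹) * (x * y * x⁻¹ * y⁻¹) := by
        have hp : (b*a)^(n+2) = (b*a) * (b*a)^n * (b*a) := by
          rw [pow_succ, pow_succ']
        rw [hp, hRn, hx, hy]
        have := key_identity a b ((b*a)^n) n
        rw [this]
      rw [hid]
      have h1 := hD (x * R * x⁻¹) (x * y * x⁻¹ * y⁻¹)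
      have h2 : f (x * R * x⁻¹) = f R := hconj x R
      have h3 := hC x y
      have a1 := abs_le.mp h1
      have a3 := abs_le.mp h3
      have : f ((x * R * x⁻¹) * (x * y * x⁻¹ * y⁻¹))
          ≤ f (x * R * x⁻¹) + f (x * y * x⁻¹ * y⁻¹) + D := by linarith [a1.2]
      linarith [a3.2, this, h2]
    have hbound : ∀ m : ℕ, f ((a^(2*m))⁻¹ * (b*a)^(2*m) * (b^(2*m))⁻¹) ≤ m * (C + D) := by
      intro m
      induction m with
      | zero => simp [hf1]
      | succ k ih =>
          have := hstep (2 * k)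
          have e : 2 * (k + 1) = 2 * k + 2 := by ring
          rw [e]
          push_cast
          linarith
    have hlow : ∀ n : ℕ, (n : ℝ) * (f (a*b) - f a - f b) - 2 * D ≤
        f ((a^n)⁻¹ * (b*a)^n * (b^n)⁻¹) := by
      intro n
      have e1 := hD ((a^n)⁻¹ * (b*a)^n) ((b^n)⁻¹)
      have e2 := hD ((a^n)⁻¹) ((b*a)^n)
      have v1 : f ((a^n)⁻¹) = -((n : ℝ) * f a) := by rw [hfinv, hfpow]
      have v2 : f ((b^n)⁻¹) = -((n : ℝ) * f b) := by rw [hfinv, hfpow]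
      have v3 : f ((b*a)^n) = (n : ℝ) * f (a*b) := by rw [hfpow, hba]
      have a1 := abs_le.mp e1
      have a2 := abs_le.mp e2
      rw [v1, v2, v3] at *
      have l1 := a1.1
      have l2 := a2.1
      nlinarith [l1, l2]
    have hfin : ∀ m : ℕ, (2 * (f (a*b) - f a - f b) - (C + D)) * m ≤ 2 * D := by
      intro m
      have h1 := hbound m
      have h2 := hlow (2 * m)
      push_cast at h2
      nlinarith [h1, h2]
    have := aux_mul_nat_le hfin
    linarith
  -- assemble
  have habs2 : ∀ p : Γ × Γ, |f (p.1 * p.2) - f p.1 - f p.2| ≤ (C + D) / 2 := by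
    rintro ⟨a, b⟩
    simp only
    rw [abs_le]
    constructor
    · have := hmain b⁻¹ a⁻¹
      have e : f (b⁻¹ * a⁻¹) = -f (a * b) := by
        rw [show b⁻¹ * a⁻¹ = (a * b)⁻¹ by group, hfinv]
      rw [e, hfinv, hfinv] at this
      linarith
    · have := hmain a b
      linarith
  have hDC : D ≤ (C + D) / 2 := ciSup_le habs2
  linarith [hCD, hDC]
end

section
/- Let f : Γ → ℝ be a homogeneous quasimorphism with defect D(f), and suppose γ ∈ Γ is a product of g commutators, γ = ∏_{i=1}^g [aᵢ, bᵢ]. Then |f(γ)| ≤ (2g−1)·D(f). -/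
open scoped commutatorElement

/-- If `f` is a homogeneous quasimorphism with defect at most `D` and `γ` is a product of
`g` commutators (`g ≥ 1`), `γ = [a₁,b₁]⋯[a_g,b_g]`, then `|f γ| ≤ (2g − 1) · D`. -/
theorem homogeneous_quasimorphism_bound_on_commutator_product {Γ : Type*} [Group Γ]
    (f : Γ → ℝ) (D : ℝ)
    (hdef : ∀ a b : Γ, |f (a * b) - f a - f b| ≤ D)
    (hhom : ∀ (n : ℤ) (x : Γ), f (x ^ n) = n * f x)
    (g : ℕ) (hg : 1 ≤ g) (a b : Fin g → Γ) (γ : Γ)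
    (hγ : γ = (List.ofFn fun i : Fin g => ⁅a i, b i⁆).prod) :
    |f γ| ≤ (2 * g - 1 : ℝ) * D := by
  have hf1 : f 1 = 0 := by simpa using hhom 0 1
  have hD0 : 0 ≤ D := by
    have := hdef 1 1
    simp [hf1] at this
    linarith
  have hinv : ∀ x : Γ, f x⁻¹ = - f x := by
    intro x
    have := hhom (-1) x
    simpa [zpow_neg_one] using this
  -- conjugation invariance
  have hconj : ∀ x y : Γ, f (x * y * x⁻¹) = f y := by
    intro x y
    by_contra hne
    set d := f (x * y * x⁻¹) - f y with hd
    have hdne : |d| > 0 := abs_pos.mpr (sub_ne_zero.mpr hne)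
    obtain ⟨n, hn⟩ := exists_nat_gt ((2 * D) / |d|)
    have hn' : 2 * D < n * |d| := by
      rw [div_lt_iff₀ hdne] at hn
      linarith
    have key : (n : ℝ) * |d| ≤ 2 * D := by
      have hpow : (x * y * x⁻¹) ^ (n : ℤ) = x * y ^ (n : ℤ) * x⁻¹ := by
        rw [conj_zpow]
      have e1 : f ((x * y * x⁻¹) ^ (n : ℤ)) = n * f (x * y * x⁻¹) := hhom n _
      have e2 : f (y ^ (n : ℤ)) = n * f y := hhom n _
      have h1 := hdef x (y ^ (n : ℤ) * x⁻¹)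
      have h2 := hdef (y ^ (n : ℤ)) x⁻¹
      rw [hinv x] at h2
      rw [e2] at h2
      have heq : f (x * (y ^ (n : ℤ) * x⁻¹)) = n * f (x * y * x⁻¹) := by
        rw [← mul_assoc, ← hpow, e1]
      rw [heq] at h1
      have : |(n : ℝ) * f (x * y * x⁻¹) - n * f y| ≤ 2 * D := by
        have hAB : (n : ℝ) * f (x * y * x⁻¹) - n * f y =
            ((n : ℝ) * f (x * y * x⁻¹) - f x - f (y ^ (n : ℤ) * x⁻¹))
            + (f (y ^ (n : ℤ) * x⁻¹) - n * f y - - f x) := by ring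
        rw [hAB]
        exact le_trans (abs_add_le _ _) (by linarith)
      calc (n : ℝ) * |d| = |(n : ℝ) * d| := by
            rw [abs_mul, abs_of_nonneg (by positivity : (0:ℝ) ≤ (n:ℝ))]
        _ = |(n : ℝ) * f (x * y * x⁻¹) - n * f y| := by rw [hd]; ring_nf
        _ ≤ 2 * D := this
    linarith
  -- commutator bound
  have hcomm : ∀ u v : Γ, |f ⁅u, v⁆| ≤ D := by
    intro u v
    have h := hdef (u * v * u⁻¹) v⁻¹
    rw [hconj u v, hinv v] at h
    have : ⁅u, v⁆ = (u * v * u⁻¹) * v⁻¹ := by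
      simp [commutatorElement_def, mul_assoc]
    rw [this]
    calc |f ((u * v * u⁻¹) * v⁻¹)| = |f ((u * v * u⁻¹) * v⁻¹) - f v - - f v| := by ring_nf
      _ ≤ D := h
  -- list lemma
  have listlem : ∀ L : List Γ, L ≠ [] → (∀ x ∈ L, |f x| ≤ D) →
      |f L.prod| ≤ (2 * L.length - 1) * D := by
    intro L
    induction L with
    | nil => intro h; exact absurd rfl h
    | cons x L ih =>
      intro _ hmem
      by_cases hL : L = []
      · subst hL
        have := hmem x List.mem_cons_self
        simp only [List.prod_cons, List.prod_nil, mul_one, List.length_cons,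
          List.length_nil]
        norm_num
        linarith
      · have h1 := ih hL (fun y hy => hmem y (List.mem_cons_of_mem _ hy))
        have h3 := hmem x List.mem_cons_self
        have h2 := hdef x L.prod
        have hlen : (1 : ℝ) ≤ L.length := by
          have : 1 ≤ L.length := List.length_pos_iff.mpr hL
          exact_mod_cast this
        have habs : |f (x * L.prod)| ≤ |f x| + |f L.prod| + D := by
          calc |f (x * L.prod)| = |(f (x * L.prod) - f x - f L.prod) + f x + f L.prod| := by
                ring_nf
            _ ≤ |f (x * L.prod) - f x - f L.prod| + |f x| + |f L.prod| := by
                exact le_trans (abs_add_le _ _) (by gcongr; exact abs_add_le _ _)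
            _ ≤ |f x| + |f L.prod| + D := by linarith
        rw [List.prod_cons]
        rw [List.length_cons]
        push_cast
        linarith
  have hlen : (List.ofFn fun i : Fin g => ⁅a i, b i⁆).length = g := by simp
  have hne : (List.ofFn fun i : Fin g => ⁅a i, b i⁆) ≠ [] := by
    intro h
    have := congrArg List.length h
    simp [hlen] at this
    omega
  have := listlem _ hne (by
    intro x hx
    rw [List.mem_ofFn] at hx
    obtain ⟨i, rfl⟩ := hx
    exact hcomm _ _)
  rw [hγ]
  rw [hlen] at this
  exact this
end
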